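/- Let V be a tree in which every vertex has at least two incident edges that strictly increase height and at least two incident edges that strictly decrease height. Then V admits a lamination: a family of pairwise disjoint bi-infinite simple paths (lines) such that every vertex of V belongs to exactly one line. Moreover, given any vertex v and any partial line through v already constructed, the construction can be extended to a full lamination. -/

import Mathlib

open Function Set

/-- Schröder–Bernstein with an extra property: the bijection agrees pointwise with `f`
or is a right inverse point of `g`. -/
lemma csb_matching {α : Type*} (f g : α → α) (hf : Function.Injective f)
    (hg : Function.Injective g) :
    ∃ u : α → α, Function.Bijective u ∧ ∀ x, u x = f x ∨ g (u x) = x := by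
  classical
  cases isEmpty_or_nonempty α with
  | inl hα =>
      exact ⟨f, ⟨hf, fun y => (IsEmpty.false y).elim⟩, fun x => (IsEmpty.false x).elim⟩
  | inr hα =>
  set F : Set α →o Set α :=
    { toFun := fun s => (g '' (f '' s)ᶜ)ᶜ
      monotone' := fun s t hst =>
        compl_subset_compl.mpr <| image_mono <| compl_subset_compl.mpr <|
          image_mono hst }
  set s : Set α := F.lfp
  have hs : (g '' (f '' s)ᶜ)ᶜ = s := F.map_lfp
  have hns : g '' (f '' s)ᶜ = sᶜ := compl_injective (by simp [hs])
  set g' := invFun g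
  have g'g : LeftInverse g' g := leftInverse_invFun hg
  have hg'ns : g' '' sᶜ = (f '' s)ᶜ := by rw [← hns, g'g.image_image]
  set u : α → α := s.piecewise f g' with hu
  have husurj : Surjective u := by
    rw [← range_eq_univ, hu, range_piecewise, hg'ns, union_compl_self]
  have huinj : Injective u := by
    refine (injective_piecewise_iff _).2 ⟨hf.injOn, ?_, ?_⟩
    · intro x hx y hy hxy
      obtain ⟨x', _, rfl⟩ : x ∈ g '' (f '' s)ᶜ := by rwa [hns]
      obtain ⟨y', _, rfl⟩ : y ∈ g '' (f '' s)ᶜ := by rwa [hns]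
      rw [g'g _, g'g _] at hxy
      rw [hxy]
    · intro x hx y hy hxy
      obtain ⟨y', hy', rfl⟩ : y ∈ g '' (f '' s)ᶜ := by rwa [hns]
      rw [g'g _] at hxy
      exact hy' ⟨x, hx, hxy⟩
  refine ⟨u, ⟨huinj, husurj⟩, fun x => ?_⟩
  by_cases hx : x ∈ s
  · left; simp [hu, Set.piecewise_eq_of_mem _ _ _ hx]
  · right
    obtain ⟨y, _, rfl⟩ : x ∈ g '' (f '' s)ᶜ := by rwa [hns, Set.mem_compl_iff]
    rw [hu, Set.piecewise_eq_of_notMem _ _ _ hx, g'g y]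

/-- Hall's condition for the bipartite "neighbour" graph of a tree, when each vertex has at
least two chosen neighbours and the choice relation `R` is asymmetric. -/
lemma tree_hall_condition {V : Type*} [DecidableEq V] (G : SimpleGraph V) (hG : G.IsTree)
    (R : V → V → Prop) (hR : ∀ a b, R a b → ¬R b a)
    (t : V → Finset V) (ht : ∀ v w, w ∈ t v → G.Adj v w ∧ R v w)
    (ht2 : ∀ v, 2 ≤ (t v).card) :
    ∀ s : Finset V, s.card ≤ (s.biUnion t).card := by
  classical
  obtain ⟨r⟩ := hG.isConnected.nonempty
  choose p hp hup using fun u => hG.existsUnique_path u r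
  set par : V → V := fun u => (p u).getVert 1 with hpar
  -- dichotomy: every edge is a parent-child edge
  have dich : ∀ {v w : V}, G.Adj v w → par v = w ∨ par w = v := by
    intro v w hvw
    by_cases hw : w ∈ (p v).support
    · left
      have h1 : (p v).takeUntil w hw = SimpleGraph.Walk.cons hvw SimpleGraph.Walk.nil := by
        have h2 := hG.IsAcyclic.path_unique
          ⟨(p v).takeUntil w hw, (hp v).takeUntil hw⟩ (SimpleGraph.Path.singleton hvw)
        simpa [SimpleGraph.Path.singleton] using congrArg Subtype.val h2
      have h3 := (p v).take_spec hw
      rw [h1, SimpleGraph.Walk.cons_append, SimpleGraph.Walk.nil_append] at h3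
      show (p v).getVert 1 = w
      rw [← h3]
      simp [SimpleGraph.Walk.getVert_cons_succ, SimpleGraph.Walk.getVert_zero]
    · right
      have h1 : (SimpleGraph.Walk.cons hvw.symm (p v)).IsPath := (hp v).cons hw
      have h2 := hup w _ h1
      show (p w).getVert 1 = v
      rw [← h2]
      simp [SimpleGraph.Walk.getVert_cons_succ, SimpleGraph.Walk.getVert_zero]
  intro s
  set T : Finset V := s.biUnion t with hT
  set Φ : (_ : V) × V → V := fun x => if par x.1 = x.2 then x.1 else x.2 with hΦ
  have key : ∀ v w, w ∈ t v →
      (Φ ⟨v, w⟩ = v ∧ par v = w) ∨ (Φ ⟨v, w⟩ = w ∧ par w = v) := by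
    intro v w hw
    by_cases hc : par v = w
    · left; exact ⟨by simp [hΦ, hc], hc⟩
    · right
      rcases dich (ht v w hw).1 with h | h
      · exact absurd h hc
      · exact ⟨by simp [hΦ, hc], h⟩
  have hmaps : ∀ x ∈ s.sigma t, Φ x ∈ s ∪ T := by
    rintro ⟨v, w⟩ hx
    rw [Finset.mem_sigma] at hx
    rcases key v w hx.2 with ⟨he, _⟩ | ⟨he, _⟩
    · rw [he]; exact Finset.mem_union_left _ hx.1
    · rw [he]
      exact Finset.mem_union_right _ (Finset.mem_biUnion.2 ⟨v, hx.1, hx.2⟩)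
  have hinj : Set.InjOn Φ ↑(s.sigma t) := by
    rintro ⟨v, w⟩ hx ⟨v', w'⟩ hy hxy
    simp only [Finset.coe_sigma, Set.mem_sigma_iff, Finset.mem_coe] at hx hy
    rcases key v w hx.2 with ⟨he, hpe⟩ | ⟨he, hpe⟩ <;>
      rcases key v' w' hy.2 with ⟨he', hpe'⟩ | ⟨he', hpe'⟩
    · -- both children: v = v'
      have hv : v = v' := by rw [← he, ← he', hxy]
      subst hv
      have : w = w' := by rw [← hpe, hpe']
      simp [this]
    · -- v = w', and then w = par v = v'
      have hv : v = w' := by rw [← he, ← he', hxy]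
      subst hv
      rw [hpe'] at hpe
      subst hpe
      exact absurd (ht _ _ hx.2).2 (hR _ _ (ht _ _ hy.2).2)
    · have hv : w = v' := by rw [← he, ← he', hxy]
      subst hv
      rw [hpe] at hpe'
      subst hpe'
      exact absurd (ht _ _ hx.2).2 (hR _ _ (ht _ _ hy.2).2)
    · have hv : w = w' := by rw [← he, ← he', hxy]
      subst hv
      have : v = v' := by rw [← hpe, hpe']
      simp [this]
  have hcard1 : 2 * s.card ≤ (s.sigma t).card := by
    rw [Finset.card_sigma]
    calc 2 * s.card = ∑ _v ∈ s, 2 := by rw [Finset.sum_const, smul_eq_mul, mul_comm]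
    _ ≤ ∑ v ∈ s, (t v).card := Finset.sum_le_sum fun v _ => ht2 v
  have hcard2 : (s.sigma t).card ≤ (s ∪ T).card :=
    Finset.card_le_card_of_injOn Φ hmaps hinj
  have hcard3 : (s ∪ T).card ≤ s.card + T.card := Finset.card_union_le _ _
  omega

/-- A tree in which every vertex has at least two height-increasing and at least two
height-decreasing incident edges admits a lamination: a partition of its vertex set
into vertex sets of bi-infinite simple paths. -/
theorem lamination_exists {V : Type*} (G : SimpleGraph V) (hG : G.IsTree)
    (h : V → ℝ)
    (hup : ∀ v : V, 2 ≤ {w : V | G.Adj v w ∧ h v < h w}.ncard)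
    (hdown : ∀ v : V, 2 ≤ {w : V | G.Adj v w ∧ h w < h v}.ncard) :
    ∃ P : Set (Set V),
      (∀ L ∈ P, ∃ r : ℤ → V, Function.Injective r ∧
        (∀ n : ℤ, G.Adj (r n) (r (n + 1))) ∧ Set.range r = L) ∧
      ∀ v : V, ∃! L : Set V, L ∈ P ∧ v ∈ L := by
  classical
  -- the sets of up- and down-neighbours are finite
  have hupfin : ∀ v, {w : V | G.Adj v w ∧ h v < h w}.Finite := by
    intro v
    by_contra hf
    have := Set.Infinite.ncard hf
    have := hup v
    omega
  have hdownfin : ∀ v, {w : V | G.Adj v w ∧ h w < h v}.Finite := by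
    intro v
    by_contra hf
    have := Set.Infinite.ncard hf
    have := hdown v
    omega
  set tU : V → Finset V := fun v => (hupfin v).toFinset with htU
  set tD : V → Finset V := fun v => (hdownfin v).toFinset with htD
  have htUmem : ∀ v w, w ∈ tU v → G.Adj v w ∧ h v < h w := by
    intro v w hw; rwa [htU, Set.Finite.mem_toFinset] at hw
  have htDmem : ∀ v w, w ∈ tD v → G.Adj v w ∧ h w < h v := by
    intro v w hw; rwa [htD, Set.Finite.mem_toFinset] at hw
  have htU2 : ∀ v, 2 ≤ (tU v).card := by
    intro v
    rw [htU, ← Set.ncard_eq_toFinset_card _ (hupfin v)]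
    exact hup v
  have htD2 : ∀ v, 2 ≤ (tD v).card := by
    intro v
    rw [htD, ← Set.ncard_eq_toFinset_card _ (hdownfin v)]
    exact hdown v
  -- Hall's theorem in both directions
  obtain ⟨f, hfinj, hf⟩ := (Finset.all_card_le_biUnion_card_iff_exists_injective tU).1
    (tree_hall_condition G hG (fun a b => h a < h b) (fun a b => lt_asymm) tU htUmem htU2)
  obtain ⟨g, hginj, hg⟩ := (Finset.all_card_le_biUnion_card_iff_exists_injective tD).1
    (tree_hall_condition G hG (fun a b => h b < h a) (fun a b => lt_asymm) tD htDmem htD2)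
  -- combine via Schröder–Bernstein into a bijection moving every vertex upwards
  obtain ⟨u, hubij, hucase⟩ := csb_matching f g hfinj hginj
  have hustep : ∀ v, G.Adj v (u v) ∧ h v < h (u v) := by
    intro v
    rcases hucase v with hc | hc
    · rw [hc]; exact htUmem v _ (hf v)
    · have := htDmem (u v) _ (hg (u v))
      rw [hc] at this
      exact ⟨this.1.symm, this.2⟩
  set e : Equiv.Perm V := Equiv.ofBijective u hubij with he
  have heapp : ∀ x, e x = u x := fun _ => rfl
  have hstep : ∀ (n : ℤ) (x : V), (e ^ (n + 1)) x = u ((e ^ n) x) := by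
    intro n x
    rw [show n + 1 = 1 + n from add_comm n 1, zpow_add, zpow_one]
    simp [Equiv.Perm.mul_apply, heapp]
  have hcomp : ∀ (m k : ℤ) (x : V), (e ^ (m + k)) x = (e ^ m) ((e ^ k) x) := by
    intro m k x
    rw [zpow_add]
    rfl
  have hadj : ∀ (v : V) (n : ℤ), G.Adj ((e ^ n) v) ((e ^ (n + 1)) v) := by
    intro v n
    rw [hstep]
    exact (hustep _).1
  have hinj : ∀ v : V, Function.Injective (fun n : ℤ => (e ^ n) v) := by
    intro v
    have hmono : StrictMono (fun n : ℤ => h ((e ^ n) v)) := by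
      apply strictMono_int_of_lt_succ
      intro n
      simp only [hstep]
      exact (hustep _).2
    intro a b hab
    exact hmono.injective (congrArg h hab)
  refine ⟨Set.range (fun v => Set.range (fun n : ℤ => (e ^ n) v)), ?_, ?_⟩
  · rintro L ⟨v, rfl⟩
    exact ⟨fun n => (e ^ n) v, hinj v, hadj v, rfl⟩
  · intro v
    refine ⟨Set.range (fun n : ℤ => (e ^ n) v), ⟨⟨v, rfl⟩, ⟨0, by simp⟩⟩, ?_⟩
    rintro L ⟨⟨w, rfl⟩, ⟨k, hk⟩⟩
    change (e ^ k) w = v at hk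
    ext x
    simp only [Set.mem_range]
    constructor
    · rintro ⟨n, rfl⟩
      refine ⟨n - k, ?_⟩
      rw [← hk, ← hcomp]
      norm_num
    · rintro ⟨n, rfl⟩
      exact ⟨n + k, by rw [hcomp, hk]⟩
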